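/- Let c ∈ ℂⁿ with ∑_{j=1}^n c(j) = 0 and let α ≠ 0. Then (circ(c))† = (circ(c(1)+α, ..., c(n)+α))† − (1/(n²α)) e eᵗ, where e is the all-ones vector. -/

import Mathlib

noncomputable section
open Matrix

/-- The circulant matrix with first row `c`; each subsequent row is the
cyclic right shift of the previous one. -/
def circ {n : ℕ} {α : Type*} (c : Fin n → α) : Matrix (Fin n) (Fin n) α :=
  Matrix.of fun i j => c (j - i)

/-- `X` is the Moore–Penrose inverse of the complex matrix `A`. -/
def IsMP {m n : ℕ} (A : Matrix (Fin m) (Fin n) ℂ) (X : Matrix (Fin n) (Fin m) ℂ) : Prop :=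
  A * X * A = A ∧ X * A * X = X ∧ (A * X)ᴴ = A * X ∧ (X * A)ᴴ = X * A

lemma mp_unique {n : ℕ} (B : Matrix (Fin n) (Fin n) ℂ) (X Y : Matrix (Fin n) (Fin n) ℂ)
    (hX : IsMP B X) (hY : IsMP B Y) : X = Y := by
  obtain ⟨h1, h2, h3, h4⟩ := hX
  obtain ⟨g1, g2, g3, g4⟩ := hY
  have e1 : X = X * B * Y := by
    calc X = X * B * X := h2.symm
    _ = X * (B * X)ᴴ := by rw [h3, Matrix.mul_assoc]
    _ = X * ((B * Y * B) * X)ᴴ := by rw [g1]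
    _ = X * (B * X)ᴴ * (B * Y)ᴴ := by
        simp only [conjTranspose_mul, Matrix.mul_assoc]
    _ = X * B * X * (B * Y) := by rw [h3, g3]; simp only [Matrix.mul_assoc]
    _ = X * B * Y := by rw [h2, Matrix.mul_assoc]
  have e2 : Y = X * B * Y := by
    calc Y = Y * B * Y := g2.symm
    _ = (Y * B)ᴴ * Y := by rw [g4]
    _ = (Y * (B * X * B))ᴴ * Y := by rw [h1]
    _ = (X * B)ᴴ * (Y * B)ᴴ * Y := by
        simp only [conjTranspose_mul, Matrix.mul_assoc]
    _ = X * B * (Y * B * Y) := by rw [h4, g4]; simp only [Matrix.mul_assoc]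
    _ = X * B * Y := by rw [g2]
  rw [e1, ← e2]

theorem stmt17 {n : ℕ} (hn : 2 ≤ n) (c : Fin n → ℂ) (hc : ∑ j, c j = 0)
    (α : ℂ) (hα : α ≠ 0) (X Y : Matrix (Fin n) (Fin n) ℂ)
    (hX : IsMP (circ c) X) (hY : IsMP (circ (fun j => c j + α)) Y) :
    X = Y - (1/((n : ℂ)^2 * α)) • vecMulVec (fun _ => (1 : ℂ)) (fun _ => 1) := by
  haveI : NeZero n := ⟨by omega⟩
  set A := circ c with hA
  set J : Matrix (Fin n) (Fin n) ℂ := vecMulVec (fun _ => (1 : ℂ)) (fun _ => 1) with hJ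
  have hnC : (n : ℂ) ≠ 0 := by exact_mod_cast Nat.pos_of_ne_zero (NeZero.ne n) |>.ne'
  set s : ℂ := 1/((n : ℂ)^2 * α) with hs
  have hB : circ (fun j => c j + α) = A + α • J := by
    ext i j
    simp [circ, hA, hJ, vecMulVec, Matrix.add_apply]
  have hAJ : A * J = 0 := by
    ext i j
    simp only [mul_apply, hJ, vecMulVec_apply, mul_one, Matrix.zero_apply, hA, circ, of_apply]
    exact (Fintype.sum_equiv (Equiv.subRight i) _ c (fun x => rfl)).trans hc
  have hJA : J * A = 0 := by
    ext i j
    simp only [mul_apply, hJ, vecMulVec_apply, one_mul, Matrix.zero_apply, hA, circ, of_apply]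
    exact (Fintype.sum_equiv (Equiv.subLeft j) _ c (fun x => rfl)).trans hc
  have hJJ : J * J = (n : ℂ) • J := by
    ext i j
    simp [mul_apply, hJ, vecMulVec_apply, Finset.sum_const]
  have hJH : Jᴴ = J := by
    ext i j; simp [hJ, vecMulVec_apply]
  obtain ⟨h1, h2, h3, h4⟩ := hX
  have hXJ : X * J = 0 := by
    have : X * J = X * (A * X) * J := by rw [← Matrix.mul_assoc, h2]
    rw [this, ← h3]
    calc X * (A * X)ᴴ * J = X * (Xᴴ * (Aᴴ * J)) := by
          simp only [conjTranspose_mul, Matrix.mul_assoc]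
    _ = 0 := by
        have : Aᴴ * J = 0 := by
          have := congrArg conjTranspose hJA
          simpa [conjTranspose_mul, hJH] using this
        simp [this]
  have hJX : J * X = 0 := by
    have : J * X = J * (X * A * X) := by rw [h2]
    rw [this, ← h4]
    calc J * ((X * A)ᴴ * X) = (J * Aᴴ) * (Xᴴ * X) := by
          simp only [conjTranspose_mul, Matrix.mul_assoc]
    _ = 0 := by
        have : J * Aᴴ = 0 := by
          have := congrArg conjTranspose hAJ
          simpa [conjTranspose_mul, hJH] using this
        simp [this]
  -- the candidate MP inverse of circ (c + α)
  set Z : Matrix (Fin n) (Fin n) ℂ := X + s • J with hZ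
  have hsr : α * (s * (n : ℂ)) = (n : ℂ)⁻¹ := by
    rw [hs]; field_simp
  have hBZ : (A + α • J) * Z = A * X + ((n : ℂ)⁻¹) • J := by
    rw [hZ]
    simp only [Matrix.add_mul, Matrix.mul_add, Matrix.smul_mul, Matrix.mul_smul,
      hAJ, hJX, hJJ, smul_smul, smul_zero, add_zero, zero_add]
    match_scalars <;> simp only [hs] <;> field_simp
  have hZB : Z * (A + α • J) = X * A + ((n : ℂ)⁻¹) • J := by
    rw [hZ]
    simp only [Matrix.add_mul, Matrix.mul_add, Matrix.smul_mul, Matrix.mul_smul,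
      hXJ, hJA, hJJ, smul_smul, smul_zero, add_zero, zero_add]
    match_scalars <;> simp only [hs] <;> field_simp
  have hZMP : IsMP (circ (fun j => c j + α)) Z := by
    rw [hB]
    refine ⟨?_, ?_, ?_, ?_⟩
    · rw [hBZ]
      simp only [Matrix.add_mul, Matrix.mul_add, Matrix.smul_mul, Matrix.mul_smul,
        hJA, hJJ, smul_smul, smul_zero, add_zero, zero_add, h1]
      rw [Matrix.mul_assoc, hXJ]
      simp only [Matrix.mul_zero, smul_zero, add_zero, zero_add]
      match_scalars <;> (field_simp [hs]; try ring)
    · rw [hZB, hZ]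
      simp only [Matrix.add_mul, Matrix.mul_add, Matrix.smul_mul, Matrix.mul_smul,
        hJX, hJJ, smul_smul, smul_zero, add_zero, zero_add, Matrix.mul_assoc X A J, hAJ,
        Matrix.mul_zero, h2]
      match_scalars <;> (field_simp [hs]; try ring)
    · rw [hBZ]
      simp only [conjTranspose_add, conjTranspose_smul, hJH, h3]
      congr 1
      simp
    · rw [hZB]
      simp only [conjTranspose_add, conjTranspose_smul, hJH, h4]
      congr 1
      simp
  have := mp_unique _ Y Z hY hZMP
  rw [this, hZ, hs]
  abel
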